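/- arXiv:2101.08866 — 5 statements merged into one kernel-verified Lean document; each statement's English description precedes it below -/
import Mathlib

section
/- Every singular n×n matrix over a field is row equivalent to a nilpotent matrix. -/
open Module Submodule

section Glue

variable {F V : Type*} [Field F] [AddCommGroup V] [Module F V]

/-- Glue bases of two complementary subspaces into a basis of the whole space. -/
noncomputable def glueBasis {a b : ℕ} {U U' : Submodule F V} (h : IsCompl U U')
    (bu : Basis (Fin a) F U) (bu' : Basis (Fin b) F U') : Basis (Fin (a + b)) F V :=
  ((bu.prod bu').map (Submodule.prodEquivOfIsCompl U U' h)).reindex finSumFinEquiv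

lemma glueBasis_castAdd {a b : ℕ} {U U' : Submodule F V} (h : IsCompl U U')
    (bu : Basis (Fin a) F U) (bu' : Basis (Fin b) F U') (j : Fin a) :
    glueBasis h bu bu' (Fin.castAdd b j) = bu j := by
  simp [glueBasis, Module.Basis.reindex_apply, finSumFinEquiv_symm_apply_castAdd,
    Basis.map_apply, Basis.prod_apply, Submodule.coe_prodEquivOfIsCompl']

lemma glueBasis_natAdd {a b : ℕ} {U U' : Submodule F V} (h : IsCompl U U')
    (bu : Basis (Fin a) F U) (bu' : Basis (Fin b) F U') (j : Fin b) :
    glueBasis h bu bu' (Fin.natAdd a j) = bu' j := by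
  simp [glueBasis, Module.Basis.reindex_apply, finSumFinEquiv_symm_apply_natAdd,
    Basis.map_apply, Basis.prod_apply, Submodule.coe_prodEquivOfIsCompl']

lemma glueBasis_left {a b : ℕ} {U U' : Submodule F V} (h : IsCompl U U')
    (bu : Basis (Fin a) F U) (bu' : Basis (Fin b) F U') (i : Fin (a + b)) (hi : i.val < a) :
    glueBasis h bu bu' i = bu ⟨i.val, hi⟩ := by
  have hcast : i = Fin.castAdd b ⟨i.val, hi⟩ := by ext; simp
  conv_lhs => rw [hcast]
  rw [glueBasis_castAdd]

lemma glueBasis_right {a b : ℕ} {U U' : Submodule F V} (h : IsCompl U U')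
    (bu : Basis (Fin a) F U) (bu' : Basis (Fin b) F U') (i : Fin (a + b)) (hi : a ≤ i.val) :
    glueBasis h bu bu' i = bu' ⟨i.val - a, by omega⟩ := by
  have hcast : i = Fin.natAdd a ⟨i.val - a, by omega⟩ := by ext; simp; omega
  conv_lhs => rw [hcast]
  rw [glueBasis_natAdd]

end Glue

theorem singular_row_equiv_nilpotent {F : Type*} [Field F] {n : ℕ}
    (M : Matrix (Fin n) (Fin n) F) (hM : ¬ IsUnit M) :
    ∃ (P N : Matrix (Fin n) (Fin n) F), IsUnit P ∧ IsNilpotent N ∧ N = P * M := by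
  classical
  set f : (Fin n → F) →ₗ[F] (Fin n → F) := M.mulVecLin with hf
  -- the kernel is nontrivial
  have hdet : M.det = 0 := by
    by_contra h
    exact hM ((Matrix.isUnit_iff_isUnit_det M).mpr (isUnit_iff_ne_zero.mpr h))
  obtain ⟨v0, hv0, hMv0⟩ := (Matrix.exists_mulVec_eq_zero_iff).mpr hdet
  set K := LinearMap.ker f with hKdef
  have hv0K : v0 ∈ K := by
    simp only [hKdef, LinearMap.mem_ker, hf, Matrix.mulVecLin_apply, hMv0]
  set d := finrank F K with hddef
  have hd : 1 ≤ d := by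
    rw [hddef, Nat.one_le_iff_ne_zero]
    intro h0
    have : K = ⊥ := Submodule.finrank_eq_zero.mp h0
    rw [this] at hv0K
    exact hv0 (Submodule.mem_bot F |>.mp hv0K)
  obtain ⟨W, hW⟩ := K.exists_isCompl
  set r := finrank F W with hrdef
  have hrd : r + d = n := by
    have h1 := Submodule.finrank_add_eq_of_isCompl hW.symm
    rw [Module.finrank_fin_fun] at h1
    exact h1
  have hrn : r < n := by omega
  -- adapted basis bB : first r vectors in W, last d in K
  set bB : Basis (Fin n) F (Fin n → F) :=
    (glueBasis hW.symm (finBasis F W) (finBasis F K)).reindex (finCongr hrd) with hbBdef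
  have hbBW : ∀ i : Fin n, i.val < r → bB i ∈ W := by
    intro i hi
    rw [hbBdef, Module.Basis.reindex_apply, glueBasis_left _ _ _ _ (by simpa using hi)]
    exact (finBasis F W _).2
  have hbBK : ∀ i : Fin n, r ≤ i.val → bB i ∈ K := by
    intro i hi
    rw [hbBdef, Module.Basis.reindex_apply, glueBasis_right _ _ _ _ (by simpa using hi)]
    exact (finBasis F K _).2
  -- the images of the first r basis vectors
  set v : Fin r → (Fin n → F) := fun j => f (bB ⟨j.val, by omega⟩) with hvdef
  have hv : LinearIndependent F v := by
    rw [Fintype.linearIndependent_iff]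
    intro gc hsum
    set x : Fin n → F := ∑ j : Fin r, gc j • bB ⟨j.val, by omega⟩ with hxdef
    have hfx : f x = 0 := by
      rw [hxdef, map_sum]
      simpa [map_smul] using hsum
    have hxK : x ∈ K := LinearMap.mem_ker.mpr hfx
    have hxW : x ∈ W := by
      refine Submodule.sum_mem _ fun j _ => Submodule.smul_mem _ _ ?_
      exact hbBW _ (by simp)
    have hx0 : x = 0 := Submodule.disjoint_def.mp hW.disjoint x hxK hxW
    have hli : LinearIndependent F (fun j : Fin r => bB ⟨j.val, by omega⟩) :=
      bB.linearIndependent.comp (fun j : Fin r => (⟨j.val, by omega⟩ : Fin n))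
        (fun a b hab => by
          apply Fin.ext
          simpa using congrArg Fin.val hab)
    exact Fintype.linearIndependent_iff.mp hli gc hx0
  -- a basis whose first r vectors are v
  obtain ⟨W₂, hW₂⟩ := (span F (Set.range v)).exists_isCompl
  have hspanrank : finrank F (span F (Set.range v)) = r := by
    rw [finrank_span_eq_card hv, Fintype.card_fin]
  have hW₂rank : r + finrank F W₂ = n := by
    have h1 := Submodule.finrank_add_eq_of_isCompl hW₂
    rw [Module.finrank_fin_fun, hspanrank] at h1
    exact h1
  set c : Basis (Fin n) F (Fin n → F) :=
    (glueBasis hW₂ (Basis.span hv) (finBasis F W₂)).reindex (finCongr hW₂rank) with hcdef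
  have hc : ∀ (i : Fin n) (hi : i.val < r), c i = v ⟨i.val, hi⟩ := by
    intro i hi
    rw [hcdef, Module.Basis.reindex_apply, glueBasis_left _ _ _ _ (by simpa using hi),
      Basis.span_apply]
    congr 1
  -- the automorphism
  obtain ⟨m, rfl⟩ : ∃ m, n = m + 1 := ⟨n - 1, by omega⟩
  set σ : Fin (m + 1) ≃ Fin (m + 1) := finRotate (m + 1) with hσdef
  set e : (Fin (m + 1) → F) ≃ₗ[F] (Fin (m + 1) → F) := c.equiv bB σ with hedef
  set g : (Fin (m + 1) → F) →ₗ[F] (Fin (m + 1) → F) := e.toLinearMap ∘ₗ f with hgdef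
  have hσval : ∀ i : Fin (m + 1), i.val < r → (σ i).val = i.val + 1 := by
    intro i hi
    rw [hσdef, finRotate_succ_apply]
    exact Fin.val_add_one_of_lt (by rw [Fin.lt_iff_val_lt_val]; simp; omega)
  have hkey : ∀ i : Fin (m + 1), g (bB i) = if h : i.val < r then bB (σ i) else 0 := by
    intro i
    split_ifs with h
    · have h1 : f (bB i) = c i := by rw [hc i h]
      rw [hgdef, LinearMap.comp_apply, h1]
      show e (c i) = bB (σ i)
      rw [hedef, Basis.equiv_apply]
    · have h1 : f (bB i) = 0 := LinearMap.mem_ker.mp (hbBK i (by omega))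
      rw [hgdef, LinearMap.comp_apply, h1, map_zero]
  have hclaim : ∀ (k : ℕ) (i : Fin (m + 1)), m + 1 ≤ i.val + k → (g ^ k) (bB i) = 0 := by
    intro k
    induction k with
    | zero => intro i hi; exact absurd i.isLt (by omega)
    | succ k ih =>
      intro i hi
      rw [pow_succ, Module.End.mul_apply]
      by_cases h : i.val < r
      · rw [hkey i, dif_pos h]
        exact ih _ (by rw [hσval i h]; omega)
      · rw [hkey i, dif_neg h, map_zero]
  have hnil : IsNilpotent g := by
    refine ⟨m + 1, ?_⟩
    apply bB.ext
    intro i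
    simpa using hclaim (m + 1) i (by omega)
  -- back to matrices
  refine ⟨LinearMap.toMatrix' (e : (Fin (m+1) → F) →ₗ[F] (Fin (m+1) → F)),
    LinearMap.toMatrix' g, ?_, ?_, ?_⟩
  · have hcomp1 : (e : (Fin (m+1) → F) →ₗ[F] _) ∘ₗ (e.symm : (Fin (m+1) → F) →ₗ[F] _) =
        LinearMap.id := LinearMap.ext fun x => e.apply_symm_apply x
    have hcomp2 : (e.symm : (Fin (m+1) → F) →ₗ[F] _) ∘ₗ (e : (Fin (m+1) → F) →ₗ[F] _) =
        LinearMap.id := LinearMap.ext fun x => e.symm_apply_apply x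
    exact ⟨⟨LinearMap.toMatrix' (e : (Fin (m+1) → F) →ₗ[F] _),
      LinearMap.toMatrix' (e.symm : (Fin (m+1) → F) →ₗ[F] _),
      by rw [← LinearMap.toMatrix'_comp, hcomp1, LinearMap.toMatrix'_id],
      by rw [← LinearMap.toMatrix'_comp, hcomp2, LinearMap.toMatrix'_id]⟩,
      rfl⟩
  · have heq : LinearMap.toMatrix' g = LinearMap.toMatrixAlgEquiv' g := rfl
    rw [heq]
    exact hnil.map (LinearMap.toMatrixAlgEquiv' : _ ≃ₐ[F] Matrix (Fin (m+1)) (Fin (m+1)) F)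
  · rw [hgdef, LinearMap.toMatrix'_comp]
    congr 1
    rw [hf, ← Matrix.toLin'_apply', LinearMap.toMatrix'_toLin']
end

section
/- If two m×n matrices over a field have the same (right) null space, then they are row equivalent. -/
theorem same_null_space_row_equiv {F : Type*} [Field F] {m n : ℕ}
    (A B : Matrix (Fin m) (Fin n) F)
    (h : ∀ v : Fin n → F, A.mulVec v = 0 ↔ B.mulVec v = 0) :
    ∃ P : Matrix (Fin m) (Fin m) F, IsUnit P ∧ B = P * A := by
  classical
  set f := A.mulVecLin with hf
  set g := B.mulVecLin with hg
  have hker : LinearMap.ker f = LinearMap.ker g := by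
    ext v
    simpa [f, g, Matrix.mulVecLin_apply] using h v
  -- iso between ranges
  let e1 : LinearMap.range f ≃ₗ[F] LinearMap.range g :=
    f.quotKerEquivRange.symm.trans ((Submodule.quotEquivOfEq _ _ hker).trans g.quotKerEquivRange)
  have he1 : ∀ x, (e1 ⟨f x, LinearMap.mem_range_self f x⟩ : Fin m → F) = g x := by
    intro x
    simp [e1, LinearMap.quotKerEquivRange_symm_apply_image, Submodule.quotEquivOfEq_mk,
      LinearMap.quotKerEquivRange_apply_mk]
  obtain ⟨p, hp⟩ := Submodule.exists_isCompl (LinearMap.range f)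
  obtain ⟨q, hq⟩ := Submodule.exists_isCompl (LinearMap.range g)
  have hfr : Module.finrank F (LinearMap.range f) = Module.finrank F (LinearMap.range g) :=
    e1.finrank_eq
  have hdim : Module.finrank F p = Module.finrank F q := by
    have h1 := Submodule.finrank_add_eq_of_isCompl hp
    have h2 := Submodule.finrank_add_eq_of_isCompl hq
    omega
  let e2 : p ≃ₗ[F] q := LinearEquiv.ofFinrankEq _ _ hdim
  let e : (Fin m → F) ≃ₗ[F] (Fin m → F) :=
    (Submodule.prodEquivOfIsCompl _ _ hp).symm.trans
      ((e1.prodCongr e2).trans (Submodule.prodEquivOfIsCompl _ _ hq))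
  have he : ∀ x, e (f x) = g x := by
    intro x
    show e ((⟨f x, LinearMap.mem_range_self f x⟩ : LinearMap.range f) : Fin m → F) = g x
    rw [show e = ((Submodule.prodEquivOfIsCompl _ _ hp).symm.trans
      ((e1.prodCongr e2).trans (Submodule.prodEquivOfIsCompl _ _ hq))) from rfl]
    rw [LinearEquiv.trans_apply, LinearEquiv.trans_apply,
      Submodule.prodEquivOfIsCompl_symm_apply_left _ _ hp, LinearEquiv.prodCongr_apply,
      Submodule.coe_prodEquivOfIsCompl']
    rw [show e2 0 = 0 from e2.map_zero, he1 x]; simp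
  set P := LinearMap.toMatrix' (e : (Fin m → F) →ₗ[F] (Fin m → F)) with hP
  set Q := LinearMap.toMatrix' (e.symm : (Fin m → F) →ₗ[F] (Fin m → F)) with hQ
  have hPQ : P * Q = 1 := by
    rw [hP, hQ, ← LinearMap.toMatrix'_comp, ← LinearMap.toMatrix'_id (R := F) (n := Fin m)]
    congr 1
    ext v
    simp
  have hQP : Q * P = 1 := by
    rw [hP, hQ, ← LinearMap.toMatrix'_comp, ← LinearMap.toMatrix'_id (R := F) (n := Fin m)]
    congr 1
    ext v
    simp
  refine ⟨P, ⟨⟨P, Q, hPQ, hQP⟩, rfl⟩, ?_⟩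
  have hcomp : g = (e : (Fin m → F) →ₗ[F] (Fin m → F)) ∘ₗ f := by
    ext x
    simp [he]
  have hB : B = LinearMap.toMatrix' g := by
    rw [hg, ← Matrix.toLin'_apply', LinearMap.toMatrix'_toLin']
  have hA : A = LinearMap.toMatrix' f := by
    rw [hf, ← Matrix.toLin'_apply', LinearMap.toMatrix'_toLin']
  rw [hB, hcomp, LinearMap.toMatrix'_comp, ← hP, ← hA]
end

section
/- For scalars a ≠ 0 and b in a field, the nilpotent matrix M with rows (-1, 0, -a), (-b/a, 0, -b), (-(b-1)/a, 1, 1) is row equivalent to the RREF matrix T with rows (1, 0, a), (0, 1, b), (0, 0, 0). -/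
theorem nilpotent_row_equiv_rref {F : Type*} [Field F] (a b : F) (ha : a ≠ 0) :
    ∃ P : Matrix (Fin 3) (Fin 3) F, IsUnit P ∧
      (!![-1, 0, -a; -b/a, 0, -b; -(b-1)/a, 1, 1] : Matrix (Fin 3) (Fin 3) F) =
        P * (!![1, 0, a; 0, 1, b; 0, 0, 0] : Matrix (Fin 3) (Fin 3) F) := by
  refine ⟨!![-1, 0, 0; -b/a, 0, 1; -(b-1)/a, 1, 0], ?_, ?_⟩
  · rw [Matrix.isUnit_iff_isUnit_det]
    simp [Matrix.det_fin_three]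
  · ext i j
    fin_cases i <;> fin_cases j <;>
      simp [Matrix.mul_apply, Fin.sum_univ_succ] <;> field_simp <;> ring
end

section
/- For every subspace W of F^n over a field F with dim W ≥ 1, there exists a nilpotent n×n matrix N whose null space equals W. -/
open Module

theorem exists_nilpotent_with_null_space {F : Type*} [Field F] {n : ℕ}
    (W : Submodule F (Fin n → F)) (hW : 1 ≤ Module.finrank F W) :
    ∃ N : Matrix (Fin n) (Fin n) F, IsNilpotent N ∧ LinearMap.ker N.mulVecLin = W := by
  classical
  set k := Module.finrank F W with hk
  obtain ⟨U, hU⟩ := Submodule.exists_isCompl W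
  have hkm : k + Module.finrank F U = n := by
    have h1 := Submodule.finrank_add_eq_of_isCompl hU
    rwa [Module.finrank_fin_fun] at h1
  set m := Module.finrank F U with hm
  let bW : Basis (Fin k) F W := Module.finBasis F W
  let bU : Basis (Fin m) F U := Module.finBasis F U
  let b : Basis (Fin n) F (Fin n → F) :=
    ((bW.prod bU).map (Submodule.prodEquivOfIsCompl W U hU)).reindex
      (finSumFinEquiv.trans (finCongr hkm))
  have hkn : k ≤ n := le_of_add_le_left hkm.le
  have hb : ∀ (j : Fin k), b ⟨(j : ℕ), lt_of_lt_of_le j.isLt hkn⟩ = (bW j : Fin n → F) := by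
    intro j
    simp only [b, Basis.reindex_apply, Equiv.symm_trans_apply]
    have : (finCongr hkm).symm ⟨(j : ℕ), lt_of_lt_of_le j.isLt hkn⟩ =
        (⟨(j : ℕ), lt_of_lt_of_le j.isLt (Nat.le_add_right k m)⟩ : Fin (k + m)) := rfl
    rw [this]
    have h2 : finSumFinEquiv.symm (⟨(j : ℕ), lt_of_lt_of_le j.isLt (Nat.le_add_right k m)⟩ : Fin (k + m)) = Sum.inl j := by
      rw [Equiv.symm_apply_eq]; simp [Fin.ext_iff]
    rw [h2]
    simp [Submodule.coe_prodEquivOfIsCompl]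
  -- claim 1 : W = span of first k basis vectors
  have hspan : W = Submodule.span F (b '' {i : Fin n | (i : ℕ) < k}) := by
    apply le_antisymm
    · intro x hx
      have : (⟨x, hx⟩ : W) ∈ Submodule.span F (Set.range bW) := by
        rw [bW.span_eq]; trivial
      have h3 := Submodule.mem_map_of_mem (f := W.subtype) this
      rw [Submodule.map_span] at h3
      refine Submodule.span_mono ?_ h3
      rintro _ ⟨_, ⟨j, rfl⟩, rfl⟩
      exact ⟨⟨(j : ℕ), lt_of_lt_of_le j.isLt hkn⟩, j.isLt, hb j⟩
    · rw [Submodule.span_le]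
      rintro _ ⟨i, hi, rfl⟩
      have : i = ⟨((⟨(i : ℕ), hi⟩ : Fin k) : ℕ), lt_of_lt_of_le hi hkn⟩ := rfl
      rw [this, hb ⟨(i : ℕ), hi⟩]
      exact (bW ⟨(i : ℕ), hi⟩).2
  -- the shift map
  let f₀ : (Fin n → F) →ₗ[F] (Fin n → F) :=
    LinearMap.pi fun i : Fin n =>
      if h : (i : ℕ) + 1 < n ∧ k ≤ (i : ℕ) + 1 then LinearMap.proj (⟨(i : ℕ) + 1, h.1⟩ : Fin n)
      else 0
  have hf₀ : ∀ (x : Fin n → F) (i : Fin n), f₀ x i =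
      if h : (i : ℕ) + 1 < n ∧ k ≤ (i : ℕ) + 1 then x ⟨(i : ℕ) + 1, h.1⟩ else 0 := by
    intro x i
    simp only [f₀, LinearMap.pi_apply]
    split_ifs with h <;> simp
  -- nilpotency of f₀
  have hnil : ∀ (t : ℕ) (x : Fin n → F) (i : Fin n), n ≤ (i : ℕ) + t → (f₀ ^ t) x i = 0 := by
    intro t
    induction t with
    | zero => intro x i hi; exact absurd (lt_of_lt_of_le i.isLt hi) (lt_irrefl _)
    | succ t ih =>
      intro x i hi
      have : (f₀ ^ (t + 1)) x i = f₀ ((f₀ ^ t) x) i := by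
        rw [pow_succ']; rfl
      rw [this, hf₀]
      split_ifs with h
      · exact ih x ⟨(i : ℕ) + 1, h.1⟩ (by simp only [Fin.val_mk]; omega)
      · rfl
  have hf₀n : f₀ ^ n = 0 :=
    LinearMap.ext fun x => funext fun i => hnil n x i (Nat.le_add_left n (i : ℕ))
  -- conjugate
  let e := b.equivFun
  let f : (Fin n → F) →ₗ[F] (Fin n → F) := e.symm.toLinearMap ∘ₗ f₀ ∘ₗ e.toLinearMap
  have hfpow : ∀ t : ℕ, f ^ t = e.symm.toLinearMap ∘ₗ (f₀ ^ t) ∘ₗ e.toLinearMap := by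
    intro t
    induction t with
    | zero => ext x; simp
    | succ t ih =>
      ext x
      simp only [pow_succ, Module.End.mul_apply, ih, LinearMap.comp_apply, f,
        LinearEquiv.coe_coe, LinearEquiv.apply_symm_apply]
  have hfn : f ^ n = 0 := by
    rw [hfpow n, hf₀n]; ext x; simp
  -- kernel of f
  have hker : LinearMap.ker f = W := by
    ext x
    have h1 : x ∈ LinearMap.ker f ↔ f₀ (e x) = 0 := by
      simp only [LinearMap.mem_ker, f, LinearMap.comp_apply, LinearEquiv.coe_coe]
      exact e.symm.map_eq_zero_iff
    rw [h1]
    have h2 : f₀ (e x) = 0 ↔ ∀ j : Fin n, k ≤ (j : ℕ) → e x j = 0 := by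
      constructor
      · intro h j hj
        have hj1 : 1 ≤ (j : ℕ) := le_trans hW hj
        have hjp : (j : ℕ) - 1 < n := lt_of_le_of_lt (Nat.sub_le _ _) j.isLt
        have hcond : ((⟨(j : ℕ) - 1, hjp⟩ : Fin n) : ℕ) + 1 < n ∧ k ≤ ((⟨(j : ℕ) - 1, hjp⟩ : Fin n) : ℕ) + 1 := by
          simp only []
          rw [Nat.sub_add_cancel hj1]
          exact ⟨j.isLt, hj⟩
        have := congrFun h (⟨(j : ℕ) - 1, hjp⟩ : Fin n)
        rw [hf₀, dif_pos hcond] at this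
        convert this using 2
        ext
        simp [Nat.sub_add_cancel hj1]
        rfl
      · intro h
        ext i
        rw [hf₀]
        split_ifs with hc
        · exact h _ hc.2
        · rfl
    rw [h2]
    have h3 : (∀ j : Fin n, k ≤ (j : ℕ) → e x j = 0) ↔
        x ∈ Submodule.span F (b '' {i : Fin n | (i : ℕ) < k}) := by
      rw [Basis.mem_span_image]
      constructor
      · intro h j hj
        by_contra hc
        simp only [Set.mem_setOf_eq] at hc
        exact (Finsupp.mem_support_iff.mp hj) (by
          have := h j (le_of_not_gt hc)
          simpa [e, Basis.equivFun_apply] using this)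
      · intro h j hj
        have : j ∉ (b.repr x).support := fun hmem => absurd (h hmem) (not_lt.mpr hj)
        simpa [e, Basis.equivFun_apply] using Finsupp.notMem_support_iff.mp this
    rw [h3, ← hspan]
  -- produce the matrix
  refine ⟨LinearMap.toMatrixAlgEquiv' f, ⟨n, ?_⟩, ?_⟩
  · rw [← map_pow, hfn, map_zero]
  · have h4 : (LinearMap.toMatrixAlgEquiv' f).mulVecLin = f := by
      rw [← Matrix.toLin'_apply']
      exact Matrix.toLinAlgEquiv'_toMatrixAlgEquiv' f
    rw [h4, hker]
end

section
/- If an n×n matrix N over a field is nilpotent with null space of dimension ℓ, then N^{n-ℓ+1} = 0. -/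
open LinearMap Module

private lemma mulVecLin_pow_aux {F : Type*} [Field F] {n : ℕ}
    (N : Matrix (Fin n) (Fin n) F) (k : ℕ) :
    (N ^ k).mulVecLin = N.mulVecLin ^ k := by
  induction k with
  | zero => rw [pow_zero, pow_zero, Matrix.mulVecLin_one]; rfl
  | succ k ih => rw [pow_succ, Matrix.mulVecLin_mul, ih]; rfl

private lemma mulVecLin_eq_zero_aux {F : Type*} [Field F] {n : ℕ}
    {M : Matrix (Fin n) (Fin n) F} (h : M.mulVecLin = 0) : M = 0 := by
  apply Matrix.toLin'.injective
  rw [Matrix.toLin'_apply', h, map_zero]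

theorem nilpotent_index_le_of_nullity {F : Type*} [Field F] {n ℓ : ℕ}
    (N : Matrix (Fin n) (Fin n) F) (hN : IsNilpotent N)
    (hℓ : ℓ = Module.finrank F (LinearMap.ker N.mulVecLin)) :
    N ^ (n - ℓ + 1) = 0 := by
  set f : Module.End F (Fin n → F) := N.mulVecLin with hf
  obtain ⟨K, hK⟩ := hN
  have hfK : f ^ K = 0 := by rw [hf, ← mulVecLin_pow_aux, hK, Matrix.mulVecLin_zero]
  have key : ∀ i : ℕ, f ^ (i + 1) = 0 ∨ ℓ + i ≤ finrank F (LinearMap.ker (f ^ (i + 1))) := by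
    intro i
    induction i with
    | zero => right; simp only [pow_one, add_zero]; exact hℓ.le
    | succ i ih =>
      by_cases h0 : f ^ (i + 1 + 1) = 0
      · exact Or.inl h0
      right
      rcases ih with h1 | h1
      · exact absurd (by rw [pow_succ, h1, zero_mul]) h0
      have hne : LinearMap.ker (f ^ (i + 1)) ≠ LinearMap.ker (f ^ (i + 1 + 1)) := by
        intro heq
        have hconst := Module.End.ker_pow_constant heq (K + 1)
        have htop : LinearMap.ker (f ^ (i + 1)) = ⊤ := by
          rw [hconst, show i + 1 + (K + 1) = K + (i + 2) by ring, pow_add, hfK, zero_mul,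
            LinearMap.ker_zero]
        exact h0 (by rw [pow_succ, LinearMap.ker_eq_top.mp htop, zero_mul])
      have hle : LinearMap.ker (f ^ (i + 1)) ≤ LinearMap.ker (f ^ (i + 1 + 1)) := by
        intro x hx
        rw [LinearMap.mem_ker] at hx ⊢
        rw [pow_succ', Module.End.mul_apply, hx, map_zero]
      have hlt := Submodule.finrank_lt_finrank_of_lt (lt_of_le_of_ne hle hne)
      omega
  have hℓn : ℓ ≤ n := by
    rw [hℓ]
    simpa using (LinearMap.ker N.mulVecLin).finrank_le
  have hz : f ^ (n - ℓ + 1) = 0 := by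
    rcases key (n - ℓ) with h | h
    · exact h
    · have htop : LinearMap.ker (f ^ (n - ℓ + 1)) = ⊤ := by
        apply Submodule.eq_top_of_finrank_eq
        have hle := (LinearMap.ker (f ^ (n - ℓ + 1))).finrank_le
        simp only [finrank_fin_fun] at hle ⊢
        omega
      exact LinearMap.ker_eq_top.mp htop
  apply mulVecLin_eq_zero_aux
  rw [mulVecLin_pow_aux]
  exact hz
end
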